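/- Let γ > 0 and μ ∈ ℝ, and let ν be the Lévy probability measure on ℝ supported on (μ, ∞) with density f(x) = (γ/√(2π))·(x − μ)^{−3/2}·exp( −γ²/(2(x − μ)) ) for x > μ. Then f is a probability density, and for all q ∈ ℝ its characteristic function satisfies ∫_μ^∞ exp(iqx)·f(x) dx = exp( iμq − γ·|q|^{1/2}·(1 − i·sign(q)) ); i.e., the Lévy(γ,μ) distribution is the totally skewed α-stable distribution S_{1/2}(β = 1, γ, μ). -/

import Mathlib

open MeasureTheory

/-- The Lévy(γ, μ) density on `(μ, ∞)`. -/
noncomputable def levyDensity (γ μ x : ℝ) : ℝ :=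
  γ / Real.sqrt (2 * Real.pi) * (x - μ) ^ (-(3 / 2 : ℝ)) * Real.exp (-γ ^ 2 / (2 * (x - μ)))

open Set Filter


namespace Levy19

lemma inv_img : (fun x : ℝ => x ^ (-1 : ℝ)) '' Ioi 0 = Ioi 0 := by
  ext y
  simp only [mem_image, mem_Ioi]
  constructor
  · rintro ⟨x, hx, rfl⟩
    exact Real.rpow_pos_of_pos hx _
  · intro hy
    exact ⟨y⁻¹, by positivity, by rw [Real.rpow_neg_one, inv_inv]⟩

lemma integrand_eq {p a : ℝ} {x : ℝ} (hx : x ∈ Ioi (0:ℝ)) :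
    x ^ ((-1:ℝ) - 1) * ((x ^ (-1:ℝ)) ^ (p - 2) * Real.exp (-(a * x ^ (-1:ℝ))))
      = x ^ (-p) * Real.exp (-a / x) := by
  have hx0 : (0:ℝ) < x := hx
  rw [Real.rpow_neg_one, Real.inv_rpow hx0.le, ← Real.rpow_neg hx0.le,
    ← mul_assoc, ← Real.rpow_add hx0, neg_div, div_eq_mul_inv a x]
  norm_num
  congr 1
  ring

lemma J_eq {p a : ℝ} (hp : 1 < p) (ha : 0 < a) :
    ∫ x in Ioi (0:ℝ), x ^ (-p) * Real.exp (-a / x)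
      = (1 / a) ^ (p - 1) * Real.Gamma (p - 1) := by
  have h := integral_comp_rpow_Ioi (fun u : ℝ => u ^ (p - 2) * Real.exp (-(a * u)))
      (p := (-1:ℝ)) (by norm_num)
  calc ∫ x in Ioi (0:ℝ), x ^ (-p) * Real.exp (-a / x)
      = ∫ x in Ioi (0:ℝ), (|(-1:ℝ)| * x ^ ((-1:ℝ) - 1)) •
          ((x ^ (-1:ℝ)) ^ (p - 2) * Real.exp (-(a * x ^ (-1:ℝ)))) := by
        refine (setIntegral_congr_fun measurableSet_Ioi fun x hx => ?_).symm
        have hx0 : (0:ℝ) < x := hx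
        rw [smul_eq_mul, abs_neg, abs_one, one_mul]
        exact (integrand_eq (p := p) (a := a) hx)
    _ = ∫ y in Ioi (0:ℝ), y ^ (p - 2) * Real.exp (-(a * y)) := h
    _ = (1 / a) ^ (p - 1) * Real.Gamma (p - 1) := by
        rw [show p - 2 = p - 1 - 1 by ring]
        exact Real.integral_rpow_mul_exp_neg_mul_Ioi (by linarith) ha

lemma J_integrable {p a : ℝ} (hp : 1 < p) (ha : 0 < a) :
    IntegrableOn (fun x => x ^ (-p) * Real.exp (-a / x)) (Ioi (0:ℝ)) := by
  have h1 : ∀ x ∈ Ioi (0:ℝ), HasDerivWithinAt (fun t : ℝ => t ^ (-1:ℝ))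
      ((-1:ℝ) * x ^ ((-1:ℝ) - 1)) (Ioi 0) x := fun x hx =>
    (Real.hasDerivAt_rpow_const (Or.inl (ne_of_gt hx))).hasDerivWithinAt
  have h2 : InjOn (fun x : ℝ => x ^ (-1:ℝ)) (Ioi 0) := by
    intro x hx y hy hxy
    simp only [Real.rpow_neg_one] at hxy
    exact inv_injective hxy
  have h3 := (integrableOn_image_iff_integrableOn_abs_deriv_smul measurableSet_Ioi h1 h2
    (fun u : ℝ => u ^ (p - 2) * Real.exp (-(a * u))))
  rw [inv_img] at h3
  have base : IntegrableOn (fun u : ℝ => u ^ (p - 2) * Real.exp (-(a * u))) (Ioi 0) := by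
    have := integrableOn_rpow_mul_exp_neg_mul_rpow (by linarith : (-1:ℝ) < p - 2)
      (zero_lt_one : (0:ℝ) < 1) ha
    simpa [Real.rpow_one] using this
  refine (integrableOn_congr_fun (fun x hx => ?_) measurableSet_Ioi).mp (h3.mp base)
  have hx0 : (0:ℝ) < x := hx
  rw [smul_eq_mul, abs_mul, abs_neg, abs_one, one_mul,
    abs_of_nonneg (Real.rpow_nonneg hx0.le _)]
  exact integrand_eq hx

end Levy19



namespace Levy19

noncomputable def cst : ℝ := (Real.sqrt (2 * Real.pi))⁻¹

lemma cst_pos : 0 < cst := by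
  have : 0 < Real.sqrt (2 * Real.pi) := Real.sqrt_pos.2 (by positivity)
  exact inv_pos.2 this

noncomputable def d0 (γ x : ℝ) : ℝ := γ * Real.exp (-γ ^ 2 / (2 * x))
noncomputable def d1 (γ x : ℝ) : ℝ := (1 - γ ^ 2 / x) * Real.exp (-γ ^ 2 / (2 * x))
noncomputable def d2 (γ x : ℝ) : ℝ :=
  (γ ^ 3 / x ^ 2 - 3 * γ / x) * Real.exp (-γ ^ 2 / (2 * x))

lemma levy_eq (γ x : ℝ) : levyDensity γ 0 x = cst * (x ^ (-(3 / 2 : ℝ)) * d0 γ x) := by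
  unfold levyDensity d0 cst
  rw [sub_zero, div_eq_mul_inv]
  ring

lemma exp_inner_hasDerivAt (γ x : ℝ) (hx : x ≠ 0) :
    HasDerivAt (fun γ : ℝ => -γ ^ 2 / (2 * x)) (-γ / x) γ := by
  have h : HasDerivAt (fun γ : ℝ => -γ ^ 2 / (2 * x))
      ((-(((2:ℕ):ℝ) * γ ^ 1)) / (2 * x)) γ := ((hasDerivAt_pow 2 γ).neg).div_const (2 * x)
  convert h using 1
  field_simp
  ring

lemma exp_hasDerivAt (γ x : ℝ) (hx : x ≠ 0) :
    HasDerivAt (fun γ : ℝ => Real.exp (-γ ^ 2 / (2 * x)))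
      (Real.exp (-γ ^ 2 / (2 * x)) * (-γ / x)) γ :=
  (Real.hasDerivAt_exp _).comp γ (exp_inner_hasDerivAt γ x hx)

lemma d0_hasDerivAt (γ x : ℝ) (hx : x ≠ 0) :
    HasDerivAt (fun γ => d0 γ x) (d1 γ x) γ := by
  have h := (hasDerivAt_id γ).mul (exp_hasDerivAt γ x hx)
  unfold d0 d1
  refine h.congr_deriv (Eq.symm ?_)
  simp only [id]
  field_simp
  ring

lemma d1_hasDerivAt (γ x : ℝ) (hx : x ≠ 0) :
    HasDerivAt (fun γ => d1 γ x) (d2 γ x) γ := by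
  have hin : HasDerivAt (fun γ : ℝ => 1 - γ ^ 2 / x) (-(((2:ℕ):ℝ) * γ ^ 1 / x)) γ := by
    simpa using ((hasDerivAt_pow 2 γ).div_const x).const_sub 1
  have h := hin.mul (exp_hasDerivAt γ x hx)
  unfold d1 d2
  refine h.congr_deriv (Eq.symm ?_)
  field_simp
  ring

/-- The `γ`-independent complex factor. -/
noncomputable def K (q x : ℝ) : ℂ :=
  Complex.exp (Complex.I * ((q * x : ℝ) : ℂ)) * ((cst * x ^ (-(3 / 2 : ℝ)) : ℝ) : ℂ)

lemma norm_K_mul (q x z : ℝ) (hx : 0 < x) :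
    ‖K q x * (z : ℂ)‖ = cst * x ^ (-(3 / 2 : ℝ)) * |z| := by
  have h1 : ‖Complex.exp (Complex.I * ((q * x : ℝ) : ℂ))‖ = 1 := by
    rw [Complex.norm_exp]
    simp
  rw [K, norm_mul, norm_mul, h1, one_mul, Complex.norm_real, Complex.norm_real,
    Real.norm_eq_abs, Real.norm_eq_abs, abs_of_nonneg (mul_nonneg cst_pos.le (Real.rpow_nonneg hx.le _))]

lemma K_mul_ofReal (q x r : ℝ) :
    K q x * ((r : ℝ) : ℂ) =
      Complex.exp (Complex.I * ((q * x : ℝ) : ℂ)) * ((cst * (x ^ (-(3 / 2 : ℝ)) * r) : ℝ) : ℂ) := by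
  rw [K]
  push_cast
  ring

lemma Kd_hasDerivAt0 (q γ x : ℝ) (hx : x ≠ 0) :
    HasDerivAt (fun γ => K q x * ((d0 γ x : ℝ) : ℂ)) (K q x * ((d1 γ x : ℝ) : ℂ)) γ :=
  ((d0_hasDerivAt γ x hx).ofReal_comp).const_mul (K q x)

lemma Kd_hasDerivAt1 (q γ x : ℝ) (hx : x ≠ 0) :
    HasDerivAt (fun γ => K q x * ((d1 γ x : ℝ) : ℂ)) (K q x * ((d2 γ x : ℝ) : ℂ)) γ :=
  ((d1_hasDerivAt γ x hx).ofReal_comp).const_mul (K q x)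

end Levy19


section S3
open Levy19

namespace Levy19

lemma contOn_exp (γ : ℝ) :
    ContinuousOn (fun x : ℝ => Real.exp (-γ ^ 2 / (2 * x))) (Ioi 0) :=
  Real.continuous_exp.comp_continuousOn <|
    continuousOn_const.div (continuous_const.mul continuous_id).continuousOn
      (fun x hx => by
        have : (0:ℝ) < x := hx
        positivity)

lemma contOn_d0 (γ : ℝ) : ContinuousOn (fun x => d0 γ x) (Ioi 0) :=
  continuousOn_const.mul (contOn_exp γ)

lemma contOn_d1 (γ : ℝ) : ContinuousOn (fun x => d1 γ x) (Ioi 0) := by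
  apply ContinuousOn.mul _ (contOn_exp γ)
  exact continuousOn_const.sub (continuousOn_const.div continuousOn_id
    (fun x hx => ne_of_gt hx))

lemma contOn_d2 (γ : ℝ) : ContinuousOn (fun x => d2 γ x) (Ioi 0) := by
  apply ContinuousOn.mul _ (contOn_exp γ)
  apply ContinuousOn.sub
  · exact continuousOn_const.div (continuous_pow 2).continuousOn
      (fun x hx => pow_ne_zero _ (ne_of_gt hx))
  · exact continuousOn_const.div continuousOn_id (fun x hx => ne_of_gt hx)

lemma contOn_rpow : ContinuousOn (fun x : ℝ => x ^ (-(3 / 2 : ℝ))) (Ioi 0) := fun x hx =>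
  (Real.continuousAt_rpow_const x _ (Or.inl (ne_of_gt hx))).continuousWithinAt

lemma contOn_K (q : ℝ) : ContinuousOn (K q) (Ioi 0) := by
  unfold K
  apply ContinuousOn.mul
  · apply Continuous.continuousOn
    exact Complex.continuous_exp.comp (continuous_const.mul
      (Complex.continuous_ofReal.comp (continuous_const.mul continuous_id)))
  · exact Complex.continuous_ofReal.comp_continuousOn (continuousOn_const.mul contOn_rpow)

lemma contOn_Kd {g : ℝ → ℝ} (hg : ContinuousOn g (Ioi 0)) (q : ℝ) :
    ContinuousOn (fun x => K q x * ((g x : ℝ) : ℂ)) (Ioi 0) :=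
  (contOn_K q).mul (Complex.continuous_ofReal.comp_continuousOn hg)

lemma aesm_Kd {g : ℝ → ℝ} (hg : ContinuousOn g (Ioi 0)) (q : ℝ) :
    AEStronglyMeasurable (fun x => K q x * ((g x : ℝ) : ℂ))
      (volume.restrict (Ioi 0)) :=
  (contOn_Kd hg q).aestronglyMeasurable measurableSet_Ioi

/-- Generic integrability criterion. -/
lemma integrable_of_bound {f : ℝ → ℂ} (hf : AEStronglyMeasurable f (volume.restrict (Ioi 0)))
    {g : ℝ → ℝ} (hg : IntegrableOn g (Ioi 0)) (h : ∀ x ∈ Ioi (0:ℝ), ‖f x‖ ≤ g x) :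
    IntegrableOn f (Ioi (0:ℝ)) :=
  Integrable.mono' hg hf <| by
    filter_upwards [ae_restrict_mem measurableSet_Ioi] with x hx using h x hx

lemma rpow_shift (x : ℝ) (hx : 0 < x) (p : ℝ) : x ^ (-p) * x⁻¹ = x ^ (-(p+1)) := by
  rw [show -(p+1) = -p + -1 by ring, Real.rpow_add hx, Real.rpow_neg_one]

lemma exp_mono_b {γ b x : ℝ} (hx : 0 < x) (hb : b ≤ γ ^ 2 / 2) :
    Real.exp (-γ ^ 2 / (2 * x)) ≤ Real.exp (-b / x) := by
  apply Real.exp_le_exp.2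
  rw [div_le_div_iff₀ (by positivity) hx]
  nlinarith [hx]

lemma ball_mem {γ₀ γ : ℝ} (hγ₀ : 0 < γ₀) (h : γ ∈ Metric.ball γ₀ (γ₀ / 2)) :
    γ₀ / 2 < γ ∧ γ < 2 * γ₀ := by
  rw [Metric.mem_ball, Real.dist_eq, abs_sub_lt_iff] at h
  constructor <;> linarith [h.1, h.2]

end Levy19

end S3


namespace Levy19

lemma abs_d0_le {γ₀ γ x : ℝ} (hγ₀ : 0 < γ₀) (hγ : γ ∈ Metric.ball γ₀ (γ₀ / 2)) (hx : 0 < x) :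
    |d0 γ x| ≤ 2 * γ₀ * Real.exp (-(γ₀ ^ 2 / 8) / x) := by
  obtain ⟨h1, h2⟩ := ball_mem hγ₀ hγ
  have hb : γ₀ ^ 2 / 8 ≤ γ ^ 2 / 2 := by nlinarith
  rw [d0, abs_mul, Real.abs_exp, abs_of_pos (by linarith : (0:ℝ) < γ)]
  exact mul_le_mul (by linarith) (exp_mono_b hx hb) (Real.exp_nonneg _) (by linarith)

lemma abs_d1_le {γ₀ γ x : ℝ} (hγ₀ : 0 < γ₀) (hγ : γ ∈ Metric.ball γ₀ (γ₀ / 2)) (hx : 0 < x) :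
    |d1 γ x| ≤ (1 + 4 * γ₀ ^ 2 / x) * Real.exp (-(γ₀ ^ 2 / 8) / x) := by
  obtain ⟨h1, h2⟩ := ball_mem hγ₀ hγ
  have hb : γ₀ ^ 2 / 8 ≤ γ ^ 2 / 2 := by nlinarith
  rw [d1, abs_mul, Real.abs_exp]
  have habs : |1 - γ ^ 2 / x| ≤ 1 + 4 * γ₀ ^ 2 / x := by
    have h3 : 0 ≤ γ ^ 2 / x := by positivity
    have h4 : γ ^ 2 / x ≤ 4 * γ₀ ^ 2 / x := by
      apply (div_le_div_iff_of_pos_right hx).2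
      nlinarith
    rw [abs_le]; constructor <;> [linarith; linarith]
  exact mul_le_mul habs (exp_mono_b hx hb) (Real.exp_nonneg _) (by positivity)

lemma abs_d2_le {γ₀ γ x : ℝ} (hγ₀ : 0 < γ₀) (hγ : γ ∈ Metric.ball γ₀ (γ₀ / 2)) (hx : 0 < x) :
    |d2 γ x| ≤ (8 * γ₀ ^ 3 / x ^ 2 + 6 * γ₀ / x) * Real.exp (-(γ₀ ^ 2 / 8) / x) := by
  obtain ⟨h1, h2⟩ := ball_mem hγ₀ hγ
  have hb : γ₀ ^ 2 / 8 ≤ γ ^ 2 / 2 := by nlinarith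
  rw [d2, abs_mul, Real.abs_exp]
  have habs : |γ ^ 3 / x ^ 2 - 3 * γ / x| ≤ 8 * γ₀ ^ 3 / x ^ 2 + 6 * γ₀ / x := by
    have hx2 : (0:ℝ) < x ^ 2 := by positivity
    have hγp : (0:ℝ) < γ := by linarith
    have ha : γ ^ 3 / x ^ 2 ≤ 8 * γ₀ ^ 3 / x ^ 2 := by
      apply (div_le_div_iff_of_pos_right hx2).2
      nlinarith [pow_le_pow_left₀ hγp.le h2.le 3]
    have hb' : 3 * γ / x ≤ 6 * γ₀ / x := by
      apply (div_le_div_iff_of_pos_right hx).2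
      nlinarith
    have hc : 0 ≤ γ ^ 3 / x ^ 2 := by positivity
    have hd : 0 ≤ 3 * γ / x := by positivity
    rw [abs_le]; constructor <;> linarith
  exact mul_le_mul habs (exp_mono_b hx hb) (Real.exp_nonneg _) (by positivity)

/-- Integrable majorants. -/
noncomputable def bnd (c p a x : ℝ) : ℝ := c * (x ^ (-p) * Real.exp (-a / x))

lemma bnd_integrable {c p a : ℝ} (hp : 1 < p) (ha : 0 < a) :
    IntegrableOn (fun x => bnd c p a x) (Ioi (0:ℝ)) :=
  (J_integrable hp ha).const_mul c

lemma norm_Kd0_le {q γ₀ γ x : ℝ} (hγ₀ : 0 < γ₀) (hγ : γ ∈ Metric.ball γ₀ (γ₀ / 2)) (hx : 0 < x) :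
    ‖K q x * ((d0 γ x : ℝ) : ℂ)‖ ≤ bnd (2 * γ₀ * cst) (3/2) (γ₀ ^ 2 / 8) x := by
  rw [norm_K_mul q x _ hx, bnd]
  calc cst * x ^ (-(3/2:ℝ)) * |d0 γ x|
      ≤ cst * x ^ (-(3/2:ℝ)) * (2 * γ₀ * Real.exp (-(γ₀ ^ 2 / 8) / x)) := by
        refine mul_le_mul_of_nonneg_left (abs_d0_le hγ₀ hγ hx) ?_
        exact mul_nonneg cst_pos.le (Real.rpow_nonneg hx.le _)
    _ = 2 * γ₀ * cst * (x ^ (-(3/2:ℝ)) * Real.exp (-(γ₀ ^ 2 / 8) / x)) := by ring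

lemma norm_Kd1_le {q γ₀ γ x : ℝ} (hγ₀ : 0 < γ₀) (hγ : γ ∈ Metric.ball γ₀ (γ₀ / 2)) (hx : 0 < x) :
    ‖K q x * ((d1 γ x : ℝ) : ℂ)‖ ≤
      bnd cst (3/2) (γ₀ ^ 2 / 8) x + bnd (4 * γ₀ ^ 2 * cst) (5/2) (γ₀ ^ 2 / 8) x := by
  rw [norm_K_mul q x _ hx, bnd, bnd]
  have h52 : x ^ (-(3/2:ℝ)) * x⁻¹ = x ^ (-(5/2:ℝ)) := by
    rw [show (-(5/2:ℝ)) = -((3:ℝ)/2 + 1) by norm_num, ← rpow_shift x hx (3/2)]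
  calc cst * x ^ (-(3/2:ℝ)) * |d1 γ x|
      ≤ cst * x ^ (-(3/2:ℝ)) * ((1 + 4 * γ₀ ^ 2 / x) * Real.exp (-(γ₀ ^ 2 / 8) / x)) := by
        refine mul_le_mul_of_nonneg_left (abs_d1_le hγ₀ hγ hx) ?_
        exact mul_nonneg cst_pos.le (Real.rpow_nonneg hx.le _)
    _ = cst * (x ^ (-(3/2:ℝ)) * Real.exp (-(γ₀ ^ 2 / 8) / x)) +
        4 * γ₀ ^ 2 * cst * ((x ^ (-(3/2:ℝ)) * x⁻¹) * Real.exp (-(γ₀ ^ 2 / 8) / x)) := by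
        field_simp
    _ = _ := by rw [h52]

lemma norm_Kd2_le {q γ₀ γ x : ℝ} (hγ₀ : 0 < γ₀) (hγ : γ ∈ Metric.ball γ₀ (γ₀ / 2)) (hx : 0 < x) :
    ‖K q x * ((d2 γ x : ℝ) : ℂ)‖ ≤
      bnd (8 * γ₀ ^ 3 * cst) (7/2) (γ₀ ^ 2 / 8) x + bnd (6 * γ₀ * cst) (5/2) (γ₀ ^ 2 / 8) x := by
  rw [norm_K_mul q x _ hx, bnd, bnd]
  have h52 : x ^ (-(3/2:ℝ)) * x⁻¹ = x ^ (-(5/2:ℝ)) := by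
    rw [show (-(5/2:ℝ)) = -((3:ℝ)/2 + 1) by norm_num, ← rpow_shift x hx (3/2)]
  have h72 : x ^ (-(5/2:ℝ)) * x⁻¹ = x ^ (-(7/2:ℝ)) := by
    rw [show (-(7/2:ℝ)) = -((5:ℝ)/2 + 1) by norm_num, ← rpow_shift x hx (5/2)]
  have h72' : x ^ (-(3/2:ℝ)) * (x ^ 2)⁻¹ = x ^ (-(7/2:ℝ)) := by
    rw [sq, mul_inv, ← mul_assoc, h52, h72]
  calc cst * x ^ (-(3/2:ℝ)) * |d2 γ x|
      ≤ cst * x ^ (-(3/2:ℝ)) *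
          ((8 * γ₀ ^ 3 / x ^ 2 + 6 * γ₀ / x) * Real.exp (-(γ₀ ^ 2 / 8) / x)) := by
        refine mul_le_mul_of_nonneg_left (abs_d2_le hγ₀ hγ hx) ?_
        exact mul_nonneg cst_pos.le (Real.rpow_nonneg hx.le _)
    _ = 8 * γ₀ ^ 3 * cst * ((x ^ (-(3/2:ℝ)) * (x ^ 2)⁻¹) * Real.exp (-(γ₀ ^ 2 / 8) / x)) +
        6 * γ₀ * cst * ((x ^ (-(3/2:ℝ)) * x⁻¹) * Real.exp (-(γ₀ ^ 2 / 8) / x)) := by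
        field_simp
    _ = _ := by rw [h52, h72']

end Levy19


namespace Levy19

noncomputable def Phi (q γ : ℝ) : ℂ := ∫ x in Ioi (0:ℝ), K q x * ((d0 γ x : ℝ) : ℂ)
noncomputable def Phi' (q γ : ℝ) : ℂ := ∫ x in Ioi (0:ℝ), K q x * ((d1 γ x : ℝ) : ℂ)
noncomputable def PhiD2 (q γ : ℝ) : ℂ := ∫ x in Ioi (0:ℝ), K q x * ((d2 γ x : ℝ) : ℂ)

lemma integrable_Kd0 (q γ : ℝ) (hγ : 0 < γ) :
    IntegrableOn (fun x => K q x * ((d0 γ x : ℝ) : ℂ)) (Ioi (0:ℝ)) := by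
  refine integrable_of_bound (aesm_Kd (contOn_d0 γ) q)
    (bnd_integrable (c := 2 * γ * cst) (p := 3/2) (a := γ ^ 2 / 8) (by norm_num) (by positivity)) (fun x hx => ?_)
  exact norm_Kd0_le hγ (Metric.mem_ball_self (by positivity)) hx

lemma integrable_Kd1 (q γ : ℝ) (hγ : 0 < γ) :
    IntegrableOn (fun x => K q x * ((d1 γ x : ℝ) : ℂ)) (Ioi (0:ℝ)) := by
  refine integrable_of_bound (aesm_Kd (contOn_d1 γ) q)
    ((bnd_integrable (c := cst) (p := 3/2) (a := γ ^ 2 / 8) (by norm_num) (by positivity)).add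
      (bnd_integrable (c := 4 * γ ^ 2 * cst) (p := 5/2) (a := γ ^ 2 / 8) (by norm_num) (by positivity)))
    (fun x hx => ?_)
  exact norm_Kd1_le hγ (Metric.mem_ball_self (by positivity)) hx

lemma integrable_Kd2 (q γ : ℝ) (hγ : 0 < γ) :
    IntegrableOn (fun x => K q x * ((d2 γ x : ℝ) : ℂ)) (Ioi (0:ℝ)) := by
  refine integrable_of_bound (aesm_Kd (contOn_d2 γ) q)
    ((bnd_integrable (c := 8 * γ ^ 3 * cst) (p := 7/2) (a := γ ^ 2 / 8) (by norm_num) (by positivity)).add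
      (bnd_integrable (c := 6 * γ * cst) (p := 5/2) (a := γ ^ 2 / 8) (by norm_num) (by positivity)))
    (fun x hx => ?_)
  exact norm_Kd2_le hγ (Metric.mem_ball_self (by positivity)) hx

lemma Phi_hasDerivAt (q γ₀ : ℝ) (hγ₀ : 0 < γ₀) :
    HasDerivAt (Phi q) (Phi' q γ₀) γ₀ := by
  have key := hasDerivAt_integral_of_dominated_loc_of_deriv_le
    (μ := volume.restrict (Ioi (0:ℝ)))
    (F := fun γ x => K q x * ((d0 γ x : ℝ) : ℂ))
    (F' := fun γ x => K q x * ((d1 γ x : ℝ) : ℂ))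
    (x₀ := γ₀) (s := Metric.ball γ₀ (γ₀ / 2))
    (bound := fun x => bnd cst (3/2) (γ₀ ^ 2 / 8) x + bnd (4 * γ₀ ^ 2 * cst) (5/2) (γ₀ ^ 2 / 8) x)
    (Metric.ball_mem_nhds _ (by positivity))
    (Eventually.of_forall fun γ => aesm_Kd (contOn_d0 γ) q)
    (integrable_Kd0 q γ₀ hγ₀)
    (aesm_Kd (contOn_d1 γ₀) q)
    ?_ ?_ ?_
  · exact key.2
  · filter_upwards [ae_restrict_mem measurableSet_Ioi] with x hx
    exact fun γ hγ => norm_Kd1_le hγ₀ hγ hx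
  · exact (bnd_integrable (p := 3/2) (by norm_num) (by positivity)).add
      (bnd_integrable (p := 5/2) (by norm_num) (by positivity))
  · filter_upwards [ae_restrict_mem measurableSet_Ioi] with x hx
    exact fun γ _ => Kd_hasDerivAt0 q γ x (ne_of_gt hx)

lemma Phi'_hasDerivAt (q γ₀ : ℝ) (hγ₀ : 0 < γ₀) :
    HasDerivAt (Phi' q) (PhiD2 q γ₀) γ₀ := by
  have key := hasDerivAt_integral_of_dominated_loc_of_deriv_le
    (μ := volume.restrict (Ioi (0:ℝ)))
    (F := fun γ x => K q x * ((d1 γ x : ℝ) : ℂ))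
    (F' := fun γ x => K q x * ((d2 γ x : ℝ) : ℂ))
    (x₀ := γ₀) (s := Metric.ball γ₀ (γ₀ / 2))
    (bound := fun x => bnd (8 * γ₀ ^ 3 * cst) (7/2) (γ₀ ^ 2 / 8) x +
      bnd (6 * γ₀ * cst) (5/2) (γ₀ ^ 2 / 8) x)
    (Metric.ball_mem_nhds _ (by positivity))
    (Eventually.of_forall fun γ => aesm_Kd (contOn_d1 γ) q)
    (integrable_Kd1 q γ₀ hγ₀)
    (aesm_Kd (contOn_d2 γ₀) q)
    ?_ ?_ ?_
  · exact key.2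
  · filter_upwards [ae_restrict_mem measurableSet_Ioi] with x hx
    exact fun γ hγ => norm_Kd2_le hγ₀ hγ hx
  · exact (bnd_integrable (p := 7/2) (by norm_num) (by positivity)).add
      (bnd_integrable (p := 5/2) (by norm_num) (by positivity))
  · filter_upwards [ae_restrict_mem measurableSet_Ioi] with x hx
    exact fun γ _ => Kd_hasDerivAt1 q γ x (ne_of_gt hx)

end Levy19


namespace Levy19

lemma sq_rpow_half {t : ℝ} (ht : 0 ≤ t) : ((t ^ 2 : ℝ)) ^ ((1:ℝ)/2) = t := by
  rw [← Real.rpow_natCast t 2, ← Real.rpow_mul ht]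
  norm_num

lemma sq_rpow_3half {t : ℝ} (ht : 0 ≤ t) : ((t ^ 2 : ℝ)) ^ ((3:ℝ)/2) = t ^ 3 := by
  rw [← Real.rpow_natCast t 2, ← Real.rpow_mul ht, ← Real.rpow_natCast t 3]
  norm_num

lemma levy_integrand_eq (γ x : ℝ) :
    levyDensity γ 0 x = (cst * γ) * (x ^ (-(3/2 : ℝ)) * Real.exp (-(γ^2/2) / x)) := by
  rw [levy_eq, d0, show -(γ^2/2)/x = -γ^2/(2*x) by ring]
  ring

lemma integrable_levy (γ : ℝ) (hγ : 0 < γ) :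
    IntegrableOn (levyDensity γ 0) (Ioi (0:ℝ)) := by
  have h := (J_integrable (p := 3/2) (a := γ^2/2) (by norm_num) (by positivity)).const_mul
    (cst * γ)
  exact IntegrableOn.congr_fun h (fun x hx => (levy_integrand_eq γ x).symm) measurableSet_Ioi

lemma levy_norm (γ : ℝ) (hγ : 0 < γ) : ∫ x in Ioi (0:ℝ), levyDensity γ 0 x = 1 := by
  have hs2 : (Real.sqrt 2) ^ 2 = 2 := Real.sq_sqrt (by norm_num)
  have hsπ : (0:ℝ) < Real.sqrt Real.pi := Real.sqrt_pos.2 Real.pi_pos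
  have hs2' : (0:ℝ) < Real.sqrt 2 := Real.sqrt_pos.2 (by norm_num)
  calc ∫ x in Ioi (0:ℝ), levyDensity γ 0 x
      = ∫ x in Ioi (0:ℝ), (cst * γ) * (x ^ (-(3/2 : ℝ)) * Real.exp (-(γ^2/2) / x)) :=
        setIntegral_congr_fun measurableSet_Ioi (fun x _ => levy_integrand_eq γ x)
    _ = (cst * γ) * ∫ x in Ioi (0:ℝ), x ^ (-(3/2 : ℝ)) * Real.exp (-(γ^2/2) / x) :=
        integral_const_mul _ _
    _ = (cst * γ) * ((1/(γ^2/2)) ^ ((3:ℝ)/2 - 1) * Real.Gamma (3/2 - 1)) := by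
        rw [J_eq (by norm_num) (by positivity)]
    _ = 1 := by
        have h1 : (1/(γ^2/2) : ℝ) = (Real.sqrt 2 / γ) ^ 2 := by
          rw [div_pow, hs2]
          field_simp
        rw [h1, show ((3:ℝ)/2 - 1) = (1:ℝ)/2 by norm_num,
          sq_rpow_half (by positivity),
          Real.Gamma_one_half_eq, cst, Real.sqrt_mul (by norm_num : (0:ℝ) ≤ 2)]
        field_simp

/-- The sqrt of 8 shorthand. -/
noncomputable def s8 : ℝ := Real.sqrt 8

lemma s8_pos : 0 < s8 := Real.sqrt_pos.2 (by norm_num)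

noncomputable def CC : ℝ := cst * s8 * Real.Gamma (1/2) + 4 * s8 ^ 3 * cst * Real.Gamma (3/2)

lemma norm_Phi_le (q γ : ℝ) (hγ : 0 < γ) : ‖Phi q γ‖ ≤ 1 := by
  rw [← levy_norm γ hγ]
  refine norm_integral_le_of_norm_le ((integrable_levy γ hγ)) ?_
  filter_upwards [ae_restrict_mem measurableSet_Ioi] with x hx
  have hx0 : (0:ℝ) < x := hx
  rw [norm_K_mul q x _ hx0, levy_eq, d0,
    abs_of_nonneg (mul_nonneg hγ.le (Real.exp_nonneg _))]
  exact le_of_eq (by ring)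

lemma norm_Phi'_le (q γ : ℝ) (hγ : 0 < γ) : ‖Phi' q γ‖ ≤ CC / γ := by
  have hb : (0:ℝ) < γ^2/8 := by positivity
  have hint : IntegrableOn
      (fun x => bnd cst (3/2) (γ ^ 2 / 8) x + bnd (4 * γ ^ 2 * cst) (5/2) (γ ^ 2 / 8) x)
      (Ioi (0:ℝ)) :=
    (bnd_integrable (by norm_num) hb).add (bnd_integrable (by norm_num) hb)
  have h1 : ‖Phi' q γ‖ ≤ ∫ x in Ioi (0:ℝ),
      (bnd cst (3/2) (γ ^ 2 / 8) x + bnd (4 * γ ^ 2 * cst) (5/2) (γ ^ 2 / 8) x) := by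
    refine norm_integral_le_of_norm_le hint ?_
    filter_upwards [ae_restrict_mem measurableSet_Ioi] with x hx
    exact norm_Kd1_le hγ (Metric.mem_ball_self (by positivity)) hx
  refine h1.trans ?_
  have h8 : (1/(γ^2/8) : ℝ) = (s8 / γ) ^ 2 := by
    rw [div_pow, s8, Real.sq_sqrt (by norm_num : (0:ℝ) ≤ 8)]
    field_simp
  rw [integral_add (bnd_integrable (by norm_num) hb) (bnd_integrable (by norm_num) hb)]
  unfold bnd
  rw [integral_const_mul, integral_const_mul, J_eq (by norm_num) hb, J_eq (by norm_num) hb,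
    show ((3:ℝ)/2 - 1) = (1:ℝ)/2 by norm_num, show ((5:ℝ)/2 - 1) = (3:ℝ)/2 by norm_num,
    h8, sq_rpow_half (div_nonneg s8_pos.le hγ.le), sq_rpow_3half (div_nonneg s8_pos.le hγ.le)]
  apply le_of_eq
  rw [CC]
  field_simp

end Levy19


namespace Levy19

/-- `u`, the oscillating factor. -/
noncomputable def uu (q x : ℝ) : ℂ := Complex.exp (Complex.I * ((q * x : ℝ) : ℂ))
/-- `v`, the density factor. -/
noncomputable def vv (γ x : ℝ) : ℂ := ((cst * (x ^ (-(3/2 : ℝ)) * d0 γ x) : ℝ) : ℂ)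
noncomputable def vv' (γ x : ℝ) : ℂ := ((2⁻¹ * (cst * (x ^ (-(3/2 : ℝ)) * d2 γ x)) : ℝ) : ℂ)

lemma uu_hasDerivAt (q x : ℝ) :
    HasDerivAt (uu q) (Complex.I * q * uu q x) x := by
  have h1 : HasDerivAt (fun x : ℝ => ((q * x : ℝ) : ℂ)) ((q : ℝ) : ℂ) x := by
    simpa using ((hasDerivAt_id x).const_mul q).ofReal_comp
  have h2 : HasDerivAt (fun x : ℝ => Complex.I * ((q * x : ℝ) : ℂ))
      (Complex.I * q) x := by
    simpa [mul_comm] using h1.const_mul Complex.I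
  have h3 := h2.cexp
  unfold uu
  convert h3 using 1
  ring

lemma real_v_hasDerivAt (γ x : ℝ) (hx : 0 < x) :
    HasDerivAt (fun x : ℝ => cst * (x ^ (-(3/2 : ℝ)) * d0 γ x))
      (2⁻¹ * (cst * (x ^ (-(3/2 : ℝ)) * d2 γ x))) x := by
  have hp : HasDerivAt (fun x : ℝ => x ^ (-(3/2 : ℝ)))
      (-(3/2) * x ^ (-(3/2 : ℝ) - 1)) x :=
    Real.hasDerivAt_rpow_const (Or.inl hx.ne')
  have hinner : HasDerivAt (fun x : ℝ => -γ ^ 2 / (2 * x)) (γ ^ 2 / (2 * x ^ 2)) x := by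
    have h := (hasDerivAt_inv hx.ne').const_mul (-γ ^ 2 / 2)
    rw [show (fun x : ℝ => -γ ^ 2 / (2 * x)) = fun x : ℝ => -γ ^ 2 / 2 * x⁻¹ from
      funext fun y => by ring]
    refine h.congr_deriv (Eq.symm ?_)
    field_simp
  have hexp : HasDerivAt (fun x : ℝ => Real.exp (-γ ^ 2 / (2 * x)))
      (Real.exp (-γ ^ 2 / (2 * x)) * (γ ^ 2 / (2 * x ^ 2))) x :=
    (Real.hasDerivAt_exp _).comp x hinner
  have hd0 : HasDerivAt (fun x : ℝ => d0 γ x)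
      (γ * (Real.exp (-γ ^ 2 / (2 * x)) * (γ ^ 2 / (2 * x ^ 2)))) x := by
    unfold d0
    exact hexp.const_mul γ
  have h := ((hp.mul hd0).const_mul cst)
  refine h.congr_deriv (Eq.symm ?_)
  rw [show (-(3/2 : ℝ) - 1) = -(3/2 : ℝ) - (1:ℝ) from rfl, Real.rpow_sub hx, Real.rpow_one]
  unfold d2 d0
  field_simp
  ring

lemma vv_hasDerivAt (γ x : ℝ) (hx : 0 < x) :
    HasDerivAt (vv γ) (vv' γ x) x := (real_v_hasDerivAt γ x hx).ofReal_comp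

lemma uu_mul_vv' (q γ x : ℝ) :
    uu q x * vv' γ x = (2⁻¹ : ℂ) * (K q x * ((d2 γ x : ℝ) : ℂ)) := by
  rw [uu, vv', K]
  push_cast
  ring

lemma uu'_mul_vv (q γ x : ℝ) :
    (Complex.I * q * uu q x) * vv γ x = (Complex.I * q) * (K q x * ((d0 γ x : ℝ) : ℂ)) := by
  rw [uu, vv, K]
  push_cast
  ring

lemma uu_mul_vv (q γ x : ℝ) :
    uu q x * vv γ x = K q x * ((d0 γ x : ℝ) : ℂ) := by
  rw [uu, vv, K]
  push_cast
  ring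

lemma tendsto_uv_zero (q γ : ℝ) (hγ : 0 < γ) :
    Tendsto (uu q * vv γ) (nhdsWithin 0 (Ioi 0)) (nhds 0) := by
  have base : Tendsto (fun t : ℝ => t ^ ((3:ℝ)/2) * Real.exp (-(γ ^ 2 / 2) * t))
      atTop (nhds 0) :=
    tendsto_rpow_mul_exp_neg_mul_atTop_nhds_zero _ _ (by positivity)
  have comp := base.comp tendsto_inv_nhdsGT_zero
  have g_tendsto : Tendsto (fun x : ℝ => cst * γ *
      (x ^ (-(3/2:ℝ)) * Real.exp (-γ ^ 2 / (2 * x)))) (nhdsWithin 0 (Ioi 0)) (nhds 0) := by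
    have comp' : Tendsto (fun x : ℝ => x ^ (-(3/2:ℝ)) * Real.exp (-γ ^ 2 / (2 * x)))
        (nhdsWithin 0 (Ioi 0)) (nhds 0) := by
      refine comp.congr' ?_
      filter_upwards [self_mem_nhdsWithin] with x (hx : (0:ℝ) < x)
      simp only [Function.comp]
      rw [Real.inv_rpow hx.le, ← Real.rpow_neg hx.le,
        show -(γ ^ 2 / 2) * x⁻¹ = -γ ^ 2 / (2 * x) by ring]
    simpa using comp'.const_mul (cst * γ)
  refine squeeze_zero_norm' ?_ g_tendsto
  filter_upwards [self_mem_nhdsWithin] with x (hx : (0:ℝ) < x)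
  rw [Pi.mul_apply, uu_mul_vv, norm_K_mul q x _ hx, d0,
    abs_of_nonneg (mul_nonneg hγ.le (Real.exp_nonneg _))]
  exact le_of_eq (by ring)

lemma tendsto_uv_atTop (q γ : ℝ) (hγ : 0 < γ) :
    Tendsto (uu q * vv γ) atTop (nhds 0) := by
  have base : Tendsto (fun x : ℝ => cst * γ * x ^ (-(3/2:ℝ))) atTop (nhds 0) := by
    simpa using (tendsto_rpow_neg_atTop (by norm_num : (0:ℝ) < 3/2)).const_mul (cst * γ)
  refine squeeze_zero_norm' ?_ base
  filter_upwards [eventually_gt_atTop (0:ℝ)] with x hx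
  rw [Pi.mul_apply, uu_mul_vv, norm_K_mul q x _ hx, d0,
    abs_of_nonneg (mul_nonneg hγ.le (Real.exp_nonneg _))]
  have hexp : Real.exp (-γ ^ 2 / (2 * x)) ≤ 1 := by
    rw [Real.exp_le_one_iff]
    apply div_nonpos_of_nonpos_of_nonneg (by nlinarith [sq_nonneg γ]) (by linarith)
  calc cst * x ^ (-(3/2:ℝ)) * (γ * Real.exp (-γ ^ 2 / (2 * x)))
      ≤ cst * x ^ (-(3/2:ℝ)) * (γ * 1) := by
        refine mul_le_mul_of_nonneg_left ?_ (mul_nonneg cst_pos.le (Real.rpow_nonneg hx.le _))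
        exact mul_le_mul_of_nonneg_left hexp hγ.le
    _ = cst * γ * x ^ (-(3/2:ℝ)) := by ring

lemma PhiD2_eq (q γ : ℝ) (hγ : 0 < γ) :
    PhiD2 q γ = (-2) * Complex.I * q * Phi q γ := by
  have huv'_int : IntegrableOn (fun x => uu q x * vv' γ x) (Ioi (0:ℝ)) := by
    exact IntegrableOn.congr_fun ((integrable_Kd2 q γ hγ).const_mul (2⁻¹ : ℂ))
      (fun x hx => (uu_mul_vv' q γ x).symm) measurableSet_Ioi
  have hu'v_int : IntegrableOn (fun x => (Complex.I * q * uu q x) * vv γ x) (Ioi (0:ℝ)) := by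
    exact IntegrableOn.congr_fun ((integrable_Kd0 q γ hγ).const_mul (Complex.I * q))
      (fun x hx => (uu'_mul_vv q γ x).symm) measurableSet_Ioi
  have key := integral_Ioi_deriv_mul_eq_sub
    (u := uu q) (v := vv γ) (u' := fun x => Complex.I * q * uu q x) (v' := vv' γ)
    (fun x hx => uu_hasDerivAt q x) (fun x hx => vv_hasDerivAt γ x hx)
    (hu'v_int.add huv'_int)
    (tendsto_uv_zero q γ hγ) (tendsto_uv_atTop q γ hγ)
  rw [integral_add hu'v_int huv'_int, sub_zero] at key
  have h1 : ∫ x in Ioi (0:ℝ), (Complex.I * q * uu q x) * vv γ x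
      = Complex.I * q * Phi q γ := by
    rw [Phi, ← integral_const_mul]
    exact setIntegral_congr_fun measurableSet_Ioi fun x hx => by rw [uu'_mul_vv]
  have h2 : ∫ x in Ioi (0:ℝ), uu q x * vv' γ x = (2⁻¹ : ℂ) * PhiD2 q γ := by
    rw [PhiD2, ← integral_const_mul]
    exact setIntegral_congr_fun measurableSet_Ioi fun x hx => by rw [uu_mul_vv']
  rw [h1, h2] at key
  have : (2⁻¹ : ℂ) * PhiD2 q γ = -(Complex.I * q * Phi q γ) := by linear_combination key
  field_simp at this
  linear_combination this

end Levy19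


namespace Levy19

lemma integral_coe {f : ℝ → ℝ} (hf : IntegrableOn f (Ioi (0:ℝ))) :
    ∫ x in Ioi (0:ℝ), ((f x : ℝ) : ℂ) = ((∫ x in Ioi (0:ℝ), f x : ℝ) : ℂ) := by
  have := ContinuousLinearMap.integral_comp_comm Complex.ofRealCLM hf
  simpa using this

lemma integrable_uv (q γ : ℝ) (hγ : 0 < γ) :
    IntegrableOn (fun x => uu q x * vv γ x) (Ioi (0:ℝ)) :=
  IntegrableOn.congr_fun (integrable_Kd0 q γ hγ)
    (fun x hx => (uu_mul_vv q γ x).symm) measurableSet_Ioi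

lemma integrable_vv (γ : ℝ) (hγ : 0 < γ) : IntegrableOn (vv γ) (Ioi (0:ℝ)) := by
  refine IntegrableOn.congr_fun ((integrable_levy γ hγ).ofReal) (fun x hx => ?_) measurableSet_Ioi
  rw [vv, levy_eq]
  norm_cast

lemma integral_vv (γ : ℝ) (hγ : 0 < γ) : ∫ x in Ioi (0:ℝ), vv γ x = 1 := by
  have hreal : ∫ x in Ioi (0:ℝ), cst * (x ^ (-(3/2 : ℝ)) * d0 γ x) = 1 := by
    rw [← levy_norm γ hγ]
    exact setIntegral_congr_fun measurableSet_Ioi fun x _ => (levy_eq γ x).symm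
  have hint : IntegrableOn (fun x => cst * (x ^ (-(3/2 : ℝ)) * d0 γ x)) (Ioi (0:ℝ)) :=
    IntegrableOn.congr_fun (integrable_levy γ hγ) (fun x _ => levy_eq γ x) measurableSet_Ioi
  unfold vv
  rw [integral_coe hint, hreal]
  norm_num

lemma Phi_near_one (q : ℝ) : ∃ C : ℝ, ∀ γ : ℝ, 0 < γ → ‖Phi q γ - 1‖ ≤ C * γ := by
  set T : ℝ := (1 + |q|)⁻¹ with hT_def
  have hT : 0 < T := by positivity
  refine ⟨2 * |q| * cst * (2 * Real.sqrt T) + 2 * cst * (2 / Real.sqrt T), fun γ hγ => ?_⟩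
  have hsub : Phi q γ - 1 = ∫ x in Ioi (0:ℝ), (uu q x - 1) * vv γ x := by
    have h1 : Phi q γ = ∫ x in Ioi (0:ℝ), uu q x * vv γ x :=
      setIntegral_congr_fun measurableSet_Ioi fun x _ => (uu_mul_vv q γ x).symm
    calc Phi q γ - 1
        = (∫ x in Ioi (0:ℝ), uu q x * vv γ x) - ∫ x in Ioi (0:ℝ), vv γ x := by
          rw [h1, integral_vv γ hγ]
      _ = ∫ x in Ioi (0:ℝ), (uu q x * vv γ x - vv γ x) :=
          (integral_sub (integrable_uv q γ hγ) (integrable_vv γ hγ)).symm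
      _ = ∫ x in Ioi (0:ℝ), (uu q x - 1) * vv γ x := by
          refine setIntegral_congr_fun measurableSet_Ioi fun x _ => ?_
          show uu q x * vv γ x - vv γ x = (uu q x - 1) * vv γ x
          ring
  have hn_int : IntegrableOn (fun x => ‖(uu q x - 1) * vv γ x‖) (Ioi (0:ℝ)) :=
    IntegrableOn.congr_fun (((integrable_uv q γ hγ).sub (integrable_vv γ hγ)).norm)
      (fun x _ => by
        show ‖uu q x * vv γ x - vv γ x‖ = ‖(uu q x - 1) * vv γ x‖
        exact congrArg norm (by ring)) measurableSet_Ioi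
  -- pointwise bounds
  have hvv_le : ∀ x : ℝ, x ∈ Ioi (0:ℝ) → ‖vv γ x‖ ≤ γ * cst * x ^ (-(3/2:ℝ)) := by
    intro x hx
    have hx0 : (0:ℝ) < x := hx
    have hexp : Real.exp (-γ ^ 2 / (2 * x)) ≤ 1 := by
      rw [Real.exp_le_one_iff]
      apply div_nonpos_of_nonpos_of_nonneg (by nlinarith [sq_nonneg γ]) (by linarith)
    rw [vv, Complex.norm_real, Real.norm_eq_abs, d0,
      abs_of_nonneg (mul_nonneg cst_pos.le (mul_nonneg (Real.rpow_nonneg hx0.le _)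
        (mul_nonneg hγ.le (Real.exp_nonneg _))))]
    calc cst * (x ^ (-(3/2:ℝ)) * (γ * Real.exp (-γ ^ 2 / (2 * x))))
        ≤ cst * (x ^ (-(3/2:ℝ)) * (γ * 1)) := by
          refine mul_le_mul_of_nonneg_left ?_ cst_pos.le
          refine mul_le_mul_of_nonneg_left ?_ (Real.rpow_nonneg hx0.le _)
          exact mul_le_mul_of_nonneg_left hexp hγ.le
      _ = γ * cst * x ^ (-(3/2:ℝ)) := by ring
  have hsplit := setIntegral_union (Ioc_disjoint_Ioi (le_refl T)) measurableSet_Ioi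
    (hn_int.mono_set Ioc_subset_Ioi_self) (hn_int.mono_set (Ioi_subset_Ioi hT.le))
  rw [hsub]
  calc ‖∫ x in Ioi (0:ℝ), (uu q x - 1) * vv γ x‖
      ≤ ∫ x in Ioi (0:ℝ), ‖(uu q x - 1) * vv γ x‖ := norm_integral_le_integral_norm _
    _ = (∫ x in Ioc (0:ℝ) T, ‖(uu q x - 1) * vv γ x‖) +
        ∫ x in Ioi T, ‖(uu q x - 1) * vv γ x‖ := by
        rw [← hsplit, Ioc_union_Ioi_eq_Ioi hT.le]
    _ ≤ (2 * |q| * γ * cst) * (2 * Real.sqrt T) + (2 * γ * cst) * (2 / Real.sqrt T) := by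
        gcongr ?_ + ?_
        · -- piece on Ioc 0 T
          have hint2 : IntegrableOn (fun x : ℝ => (2 * |q| * γ * cst) * x ^ (-(1/2:ℝ)))
              (Ioc (0:ℝ) T) := by
            exact Integrable.const_mul
              ((intervalIntegrable_iff_integrableOn_Ioc_of_le hT.le).1
                (intervalIntegral.intervalIntegrable_rpow' (by norm_num))) _
          have hI1 : ∫ x in Ioc (0:ℝ) T, x ^ (-(1/2:ℝ)) = 2 * Real.sqrt T := by
            rw [← intervalIntegral.integral_of_le hT.le,
              integral_rpow (Or.inl (by norm_num))]
            rw [Real.zero_rpow (by norm_num), Real.sqrt_eq_rpow]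
            norm_num
            ring
          calc ∫ x in Ioc (0:ℝ) T, ‖(uu q x - 1) * vv γ x‖
              ≤ ∫ x in Ioc (0:ℝ) T, (2 * |q| * γ * cst) * x ^ (-(1/2:ℝ)) := by
                refine setIntegral_mono_on (hn_int.mono_set Ioc_subset_Ioi_self) hint2
                  measurableSet_Ioc (fun x hx => ?_)
                have hx0 : (0:ℝ) < x := hx.1
                have habs : ‖Complex.I * ((q * x : ℝ) : ℂ)‖ = |q| * x := by
                  rw [norm_mul, Complex.norm_I, one_mul, Complex.norm_real, Real.norm_eq_abs, abs_mul,
                    abs_of_pos hx0]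
                have hle1 : ‖Complex.I * ((q * x : ℝ) : ℂ)‖ ≤ 1 := by
                  rw [habs]
                  calc |q| * x ≤ |q| * T := by
                        exact mul_le_mul_of_nonneg_left hx.2 (abs_nonneg q)
                    _ ≤ (1 + |q|) * T := by
                        refine mul_le_mul_of_nonneg_right (by linarith) hT.le
                    _ = 1 := by
                        rw [hT_def]
                        field_simp
                have huu1 : ‖uu q x - 1‖ ≤ 2 * (|q| * x) := by
                  rw [uu]
                  have := Complex.norm_exp_sub_one_le hle1
                  rw [habs] at this
                  exact this
                rw [norm_mul]
                calc ‖uu q x - 1‖ * ‖vv γ x‖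
                    ≤ (2 * (|q| * x)) * (γ * cst * x ^ (-(3/2:ℝ))) := by
                      exact mul_le_mul huu1 (hvv_le x hx0) (norm_nonneg _) (by positivity)
                  _ = (2 * |q| * γ * cst) * (x * x ^ (-(3/2:ℝ))) := by ring
                  _ = (2 * |q| * γ * cst) * x ^ (-(1/2:ℝ)) := by
                      rw [show (-(1/2:ℝ)) = 1 + -(3/2:ℝ) by norm_num,
                        Real.rpow_add hx0, Real.rpow_one]
            _ = (2 * |q| * γ * cst) * (2 * Real.sqrt T) := by
                rw [integral_const_mul, hI1]
        · -- piece on Ioi T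
          have hint2 : IntegrableOn (fun x : ℝ => (2 * γ * cst) * x ^ (-(3/2:ℝ))) (Ioi T) :=
            (integrableOn_Ioi_rpow_of_lt (by norm_num) hT).const_mul _
          have hI2 : ∫ x in Ioi T, x ^ (-(3/2:ℝ)) = 2 / Real.sqrt T := by
            rw [integral_Ioi_rpow_of_lt (by norm_num) hT]
            rw [show (-(3/2:ℝ) + 1) = -(1/2:ℝ) by norm_num, Real.rpow_neg hT.le,
              Real.sqrt_eq_rpow]
            norm_num
            rw [div_eq_mul_inv]
            ring
          calc ∫ x in Ioi T, ‖(uu q x - 1) * vv γ x‖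
              ≤ ∫ x in Ioi T, (2 * γ * cst) * x ^ (-(3/2:ℝ)) := by
                refine setIntegral_mono_on (hn_int.mono_set (Ioi_subset_Ioi hT.le)) hint2
                  measurableSet_Ioi (fun x hx => ?_)
                have hx0 : (0:ℝ) < x := lt_trans hT hx
                have huu1 : ‖uu q x - 1‖ ≤ 2 := by
                  calc ‖uu q x - 1‖ ≤ ‖uu q x‖ + ‖(1:ℂ)‖ := norm_sub_le _ _
                    _ ≤ 2 := by
                        rw [uu]
                        rw [Complex.norm_exp]
                        simp
                        norm_num
                rw [norm_mul]
                calc ‖uu q x - 1‖ * ‖vv γ x‖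
                    ≤ 2 * (γ * cst * x ^ (-(3/2:ℝ))) :=
                      mul_le_mul huu1 (hvv_le x hx0) (norm_nonneg _) (by norm_num)
                  _ = (2 * γ * cst) * x ^ (-(3/2:ℝ)) := by ring
            _ = (2 * γ * cst) * (2 / Real.sqrt T) := by
                rw [integral_const_mul, hI2]
    _ = (2 * |q| * cst * (2 * Real.sqrt T) + 2 * cst * (2 / Real.sqrt T)) * γ := by ring

lemma Phi_tendsto_one (q : ℝ) :
    Tendsto (fun γ => Phi q γ) (nhdsWithin 0 (Ioi 0)) (nhds 1) := by
  obtain ⟨C, hC⟩ := Phi_near_one q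
  have h0 : Tendsto (fun γ : ℝ => Phi q γ - 1) (nhdsWithin 0 (Ioi 0)) (nhds 0) := by
    have htend : Tendsto (fun γ : ℝ => C * γ) (nhdsWithin 0 (Ioi 0)) (nhds 0) := by
      have : Tendsto (fun γ : ℝ => C * γ) (nhds (0:ℝ)) (nhds (C * 0)) :=
        (continuous_const.mul continuous_id).tendsto 0
      rw [mul_zero] at this
      exact this.mono_left nhdsWithin_le_nhds
    refine squeeze_zero_norm' ?_ htend
    filter_upwards [self_mem_nhdsWithin] with γ (hγ : (0:ℝ) < γ) using hC γ hγ
  have := h0.add (tendsto_const_nhds (x := (1:ℂ)))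
  simpa using this

end Levy19


namespace Levy19

lemma const_on_Ioi {f : ℝ → ℂ} (hf : ∀ x ∈ Ioi (0:ℝ), HasDerivAt f 0 x) {a b : ℝ}
    (ha : 0 < a) (hab : a ≤ b) : f b = f a := by
  have hcont : ContinuousOn f (Icc a b) := fun x hx =>
    ((hf x (lt_of_lt_of_le ha hx.1)).continuousAt).continuousWithinAt
  have hderiv : ∀ x ∈ Ico a b, HasDerivWithinAt f 0 (Ici x) x := fun x hx =>
    ((hf x (lt_of_lt_of_le ha hx.1)).hasDerivWithinAt)
  exact constant_of_has_deriv_right_zero hcont hderiv b (right_mem_Icc.2 hab)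

lemma const_all {f : ℝ → ℂ} (hf : ∀ x ∈ Ioi (0:ℝ), HasDerivAt f 0 x) {a b : ℝ}
    (ha : 0 < a) (hb : 0 < b) : f a = f b := by
  rcases le_total a b with h | h
  · exact (const_on_Ioi hf ha h).symm
  · exact const_on_Ioi hf hb h

lemma CC_nonneg : 0 ≤ CC := by
  have g1 : 0 < Real.Gamma (1/2) := Real.Gamma_pos_of_pos (by norm_num)
  have g2 : 0 < Real.Gamma (3/2) := Real.Gamma_pos_of_pos (by norm_num)
  have h1 := cst_pos
  have h2 := s8_pos
  unfold CC
  positivity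

lemma exp_lam_hasDerivAt (lam : ℂ) (γ : ℝ) :
    HasDerivAt (fun x : ℝ => Complex.exp (lam * (x:ℂ))) (lam * Complex.exp (lam * (γ:ℂ))) γ := by
  have h1 : HasDerivAt (fun x : ℝ => ((x:ℝ):ℂ)) 1 γ := by
    simpa using (hasDerivAt_id γ).ofReal_comp
  have h2 : HasDerivAt (fun x : ℝ => lam * (x:ℂ)) lam γ := by
    simpa using h1.const_mul lam
  have := h2.cexp
  simpa [mul_comm] using this

lemma norm_exp_lam (q γ : ℝ) (hq : 0 ≤ q) :
    ‖Complex.exp (-(((Real.sqrt q : ℝ):ℂ) * (1 - Complex.I)) * (γ:ℂ))‖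
      = Real.exp (-(Real.sqrt q * γ)) := by
  rw [Complex.norm_exp]
  congr 1
  have : (-(((Real.sqrt q : ℝ):ℂ) * (1 - Complex.I)) * (γ:ℂ)) =
      Complex.mk (-(Real.sqrt q * γ)) (Real.sqrt q * γ) := by
    apply Complex.ext <;> simp [Complex.mul_re, Complex.mul_im] <;> ring
  rw [this]

lemma Phi_eq_exp (q γ : ℝ) (hq : 0 < q) (hγ : 0 < γ) :
    Phi q γ = Complex.exp (-(((Real.sqrt q : ℝ):ℂ) * (1 - Complex.I)) * (γ:ℂ)) := by
  set lam : ℂ := ((Real.sqrt q : ℝ):ℂ) * (1 - Complex.I) with hlam_def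
  have hlam2 : lam ^ 2 = -2 * Complex.I * q := by
    have h1 : ((Real.sqrt q : ℝ):ℂ) ^ 2 = (q:ℂ) := by
      norm_cast
      exact Real.sq_sqrt hq.le
    rw [hlam_def, mul_pow, h1]
    linear_combination (q:ℂ) * Complex.I_sq
  have hlam_norm : ‖lam‖ = Real.sqrt q * ‖1 - Complex.I‖ := by
    rw [hlam_def, norm_mul, Complex.norm_real, Real.norm_eq_abs,
      abs_of_nonneg (Real.sqrt_nonneg q)]
  -- Step A : Phi' = -lam * Phi on Ioi 0
  set h : ℝ → ℂ := fun γ => (Phi' q γ + lam * Phi q γ) * Complex.exp (-lam * (γ:ℂ)) with hh_def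
  have hh_deriv : ∀ x ∈ Ioi (0:ℝ), HasDerivAt h 0 x := by
    intro x hx
    have hx0 : (0:ℝ) < x := hx
    have hsum : HasDerivAt (fun γ => Phi' q γ + lam * Phi q γ)
        (PhiD2 q x + lam * Phi' q x) x :=
      (Phi'_hasDerivAt q x hx0).add ((Phi_hasDerivAt q x hx0).const_mul lam)
    have hexp := exp_lam_hasDerivAt (-lam) x
    have hmul := hsum.mul hexp
    refine hmul.congr_deriv (Eq.symm ?_)
    rw [PhiD2_eq q x hx0]
    linear_combination (Phi q x * Complex.exp (-lam * (x:ℂ))) * hlam2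
  have hbound : ∀ γ : ℝ, 1 ≤ γ → ‖h γ‖ ≤ (CC + ‖lam‖) * Real.exp (-(Real.sqrt q * γ)) := by
    intro γ h1γ
    have hγ0 : (0:ℝ) < γ := by linarith
    rw [hh_def]
    simp only []
    rw [norm_mul]
    have hexp_norm : ‖Complex.exp (-lam * (γ:ℂ))‖ = Real.exp (-(Real.sqrt q * γ)) :=
      norm_exp_lam q γ hq.le
    rw [hexp_norm]
    refine mul_le_mul_of_nonneg_right ?_ (Real.exp_nonneg _)
    calc ‖Phi' q γ + lam * Phi q γ‖ ≤ ‖Phi' q γ‖ + ‖lam * Phi q γ‖ := norm_add_le _ _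
      _ ≤ CC / γ + ‖lam‖ * 1 := by
          gcongr
          · exact norm_Phi'_le q γ hγ0
          · rw [norm_mul]
            exact mul_le_mul_of_nonneg_left (norm_Phi_le q γ hγ0) (norm_nonneg _)
      _ ≤ CC + ‖lam‖ := by
          have : CC / γ ≤ CC := by
            rw [div_le_iff₀ hγ0]
            nlinarith [CC_nonneg]
          linarith
  have htend0 : Tendsto h atTop (nhds 0) := by
    have hsq : (0:ℝ) < Real.sqrt q := Real.sqrt_pos.2 hq
    have hexp_tend : Tendsto (fun γ : ℝ => Real.exp (-(Real.sqrt q * γ))) atTop (nhds 0) := by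
      have h1 : Tendsto (fun γ : ℝ => Real.sqrt q * γ) atTop atTop :=
        Tendsto.const_mul_atTop hsq tendsto_id
      have h2 : Tendsto (fun γ : ℝ => -(Real.sqrt q * γ)) atTop atBot :=
        tendsto_neg_atBot_iff.mpr h1
      exact Real.tendsto_exp_atBot.comp h2
    have := hexp_tend.const_mul (CC + ‖lam‖)
    rw [mul_zero] at this
    refine squeeze_zero_norm' ?_ this
    filter_upwards [eventually_ge_atTop (1:ℝ)] with γ h1γ using hbound γ h1γ
  have hconst_h : ∀ γ : ℝ, 0 < γ → h γ = h 1 := fun γ hγ0 => const_all hh_deriv hγ0 one_pos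
  have hh1 : h 1 = 0 := by
    have ht1 : Tendsto h atTop (nhds (h 1)) := by
      refine tendsto_const_nhds.congr' ?_
      filter_upwards [eventually_gt_atTop (0:ℝ)] with γ hγ0 using (hconst_h γ hγ0).symm
    exact tendsto_nhds_unique ht1 htend0
  have hPhi' : ∀ γ : ℝ, 0 < γ → Phi' q γ = -lam * Phi q γ := by
    intro γ hγ0
    have := hconst_h γ hγ0
    rw [hh1, hh_def] at this
    simp only [] at this
    have hne : Complex.exp (-lam * (γ:ℂ)) ≠ 0 := Complex.exp_ne_zero _
    have hz : Phi' q γ + lam * Phi q γ = 0 := by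
      rcases mul_eq_zero.1 this with h' | h'
      · exact h'
      · exact absurd h' hne
    linear_combination hz
  -- Step B : g = Phi * exp(lam γ) is constant 1
  set g : ℝ → ℂ := fun γ => Phi q γ * Complex.exp (lam * (γ:ℂ)) with hg_def
  have hg_deriv : ∀ x ∈ Ioi (0:ℝ), HasDerivAt g 0 x := by
    intro x hx
    have hx0 : (0:ℝ) < x := hx
    have hmul := (Phi_hasDerivAt q x hx0).mul (exp_lam_hasDerivAt lam x)
    refine hmul.congr_deriv (Eq.symm ?_)
    rw [hPhi' x hx0]
    ring
  have hg_tend : Tendsto g (nhdsWithin 0 (Ioi 0)) (nhds 1) := by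
    have h2 : Tendsto (fun γ : ℝ => Complex.exp (lam * (γ:ℂ))) (nhds 0) (nhds 1) := by
      have hcont : Continuous (fun γ : ℝ => Complex.exp (lam * (γ:ℂ))) :=
        Complex.continuous_exp.comp (continuous_const.mul Complex.continuous_ofReal)
      have := hcont.tendsto 0
      simpa using this
    have := (Phi_tendsto_one q).mul (h2.mono_left nhdsWithin_le_nhds)
    simpa using this
  have hgγ : g γ = 1 := by
    have hconst : Tendsto g (nhdsWithin 0 (Ioi 0)) (nhds (g γ)) := by
      refine tendsto_const_nhds.congr' ?_
      filter_upwards [self_mem_nhdsWithin] with t (ht : (0:ℝ) < t)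
      exact (const_all hg_deriv hγ ht)
    exact tendsto_nhds_unique hconst hg_tend
  rw [hg_def] at hgγ
  simp only [] at hgγ
  have hne : Complex.exp (lam * (γ:ℂ)) ≠ 0 := Complex.exp_ne_zero _
  calc Phi q γ = Phi q γ * Complex.exp (lam * (γ:ℂ)) * (Complex.exp (lam * (γ:ℂ)))⁻¹ := by
        field_simp
    _ = (Complex.exp (lam * (γ:ℂ)))⁻¹ := by rw [hgγ, one_mul]
    _ = Complex.exp (-lam * (γ:ℂ)) := by
        rw [← Complex.exp_neg]
        ring_nf

end Levy19


namespace Levy19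

lemma Phi_zero (γ : ℝ) (hγ : 0 < γ) : Phi 0 γ = 1 := by
  rw [Phi, ← integral_vv γ hγ]
  refine setIntegral_congr_fun measurableSet_Ioi fun x _ => ?_
  rw [K, vv]
  norm_num
  push_cast
  ring

lemma Phi_conj (q γ : ℝ) : Phi (-q) γ = (starRingEnd ℂ) (Phi q γ) := by
  rw [Phi, Phi, ← integral_conj]
  refine setIntegral_congr_fun measurableSet_Ioi fun x _ => ?_
  rw [K, K, map_mul, map_mul, ← Complex.exp_conj, map_mul, Complex.conj_I,
    Complex.conj_ofReal, Complex.conj_ofReal, Complex.conj_ofReal]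
  push_cast
  ring_nf

lemma preimage_shift (μ : ℝ) : (fun x : ℝ => x + μ) ⁻¹' (Ioi μ) = Ioi 0 := by
  ext x
  simp

lemma shift_real (μ : ℝ) (f : ℝ → ℝ) :
    ∫ x in Ioi μ, f x = ∫ x in Ioi (0:ℝ), f (x + μ) := by
  rw [← (measurePreserving_add_right volume μ).setIntegral_preimage_emb
    (MeasurableEquiv.addRight μ).measurableEmbedding f (Ioi μ), preimage_shift]

lemma shift_complex (μ : ℝ) (f : ℝ → ℂ) :
    ∫ x in Ioi μ, f x = ∫ x in Ioi (0:ℝ), f (x + μ) := by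
  rw [← (measurePreserving_add_right volume μ).setIntegral_preimage_emb
    (MeasurableEquiv.addRight μ).measurableEmbedding f (Ioi μ), preimage_shift]

lemma levy_shift (γ μ x : ℝ) : levyDensity γ μ (x + μ) = levyDensity γ 0 x := by
  unfold levyDensity
  norm_num

lemma bridge (q γ μ : ℝ) :
    (∫ x in Ioi μ, Complex.exp (Complex.I * ((q * x : ℝ) : ℂ)) * ((levyDensity γ μ x : ℝ) : ℂ))
      = Complex.exp (Complex.I * ((q * μ : ℝ) : ℂ)) * Phi q γ := by
  rw [shift_complex μ (fun x => Complex.exp (Complex.I * ((q * x : ℝ) : ℂ)) *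
    ((levyDensity γ μ x : ℝ) : ℂ)), Phi, ← integral_const_mul]
  refine setIntegral_congr_fun measurableSet_Ioi fun x _ => ?_
  rw [levy_shift, levy_eq, K_mul_ofReal]
  rw [show Complex.I * ((q * (x + μ) : ℝ) : ℂ) =
    Complex.I * ((q * μ : ℝ) : ℂ) + Complex.I * ((q * x : ℝ) : ℂ) by push_cast; ring,
    Complex.exp_add]
  ring

end Levy19


theorem stmt19 (γ μ : ℝ) (hγ : 0 < γ) :
    (∫ x in Set.Ioi μ, levyDensity γ μ x = 1) ∧
    ∀ q : ℝ,
      ∫ x in Set.Ioi μ, Complex.exp (Complex.I * ((q * x : ℝ) : ℂ)) *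
          ((levyDensity γ μ x : ℝ) : ℂ) =
        Complex.exp (Complex.I * ((μ * q : ℝ) : ℂ) -
          ((γ * |q| ^ ((1 : ℝ) / 2) : ℝ) : ℂ) * (1 - Complex.I * ((Real.sign q : ℝ) : ℂ))) := by
  constructor
  · rw [Levy19.shift_real μ (levyDensity γ μ)]
    rw [show (fun x => levyDensity γ μ (x + μ)) = levyDensity γ 0 from
      funext fun x => Levy19.levy_shift γ μ x]
    exact Levy19.levy_norm γ hγ
  · intro q
    rw [Levy19.bridge q γ μ]
    rcases lt_trichotomy q 0 with hq | hq | hq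
    · -- q < 0
      have hq' : 0 < -q := by linarith
      have hPhiq : Levy19.Phi q γ = (starRingEnd ℂ) (Levy19.Phi (-q) γ) := by
        have h := Levy19.Phi_conj (-q) γ
        rw [neg_neg] at h
        exact h
      rw [hPhiq, Levy19.Phi_eq_exp (-q) γ hq' hγ, ← Complex.exp_conj, ← Complex.exp_add]
      congr 1
      rw [Real.sign_of_neg hq, abs_of_neg hq, ← Real.sqrt_eq_rpow]
      rw [map_mul, map_neg, map_mul, map_sub, map_one, Complex.conj_I, Complex.conj_ofReal,
        Complex.conj_ofReal]
      push_cast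
      ring
    · -- q = 0
      subst hq
      rw [Levy19.Phi_zero γ hγ, mul_one]
      rw [Real.sign_zero, abs_zero, Real.zero_rpow (by norm_num : ((1:ℝ)/2) ≠ 0)]
      norm_num
    · -- q > 0
      rw [Levy19.Phi_eq_exp q γ hq hγ, ← Complex.exp_add]
      congr 1
      rw [Real.sign_of_pos hq, abs_of_pos hq, show (q:ℝ) ^ ((1:ℝ)/2) = Real.sqrt q from
        (Real.sqrt_eq_rpow q).symm]
      push_cast
      ring
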